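/- Let G=(V,E,I,{s,t}) be an inner Eulerian grapht with |E|≤ℵ₀ in which s is linked. Then there is a linkage 𝒫 of s such that there is a family of pairwise edge-disjoint cycles in G−E(𝒫) covering δ_{G−E(𝒫)}(t). -/

import Mathlib

/-! Common definitions: graphts (multigraphs with terminals), walks, paths, cycles,
edge cuts, inner Eulerian graphts, path systems, linkages, Erdős–Menger cuts,
restriction (edge deletion) and contraction. -/

universe u v

/-- A *grapht*: a multigraph (no loops, parallel edges allowed) given by an incidence
function `I : E → Sym2 V`, together with a set `T` of at least two terminal vertices. -/
structure Grapht (V : Type u) (E : Type v) where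
  I : E → Sym2 V
  loopless : ∀ e : E, ¬ (I e).IsDiag
  T : Set V
  T_nontrivial : T.Nontrivial

namespace Grapht

variable {V : Type u} {E : Type v}

/-- `G.IsWalk vs es` holds when `vs` is the vertex sequence and `es` the edge sequence
of a walk in `G`. -/
inductive IsWalk (G : Grapht V E) : List V → List E → Prop
  | nil (v : V) : IsWalk G [v] []
  | cons {u w : V} {vs : List V} {e : E} {es : List E} :
      G.I e = s(u, w) → IsWalk G (w :: vs) es → IsWalk G (u :: w :: vs) (e :: es)

/-- A finite path in the grapht `G` (no repeated vertices), with endpoints `first`, `last`. -/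
structure Path (G : Grapht V E) where
  first : V
  last : V
  verts : List V
  edges : List E
  isWalk : G.IsWalk verts edges
  nodup : verts.Nodup
  head_eq : verts.head? = some first
  getLast_eq : verts.getLast? = some last

/-- A finite cycle in the grapht `G`. -/
structure Cycle (G : Grapht V E) where
  verts : List V
  edges : List E
  isWalk : G.IsWalk verts edges
  closed : verts.head? = verts.getLast?
  nontrivial : edges ≠ []
  edges_nodup : edges.Nodup
  tail_nodup : verts.tail.Nodup

variable {G : Grapht V E}

/-- The internal (inner) vertices of a path. -/
def Path.inner (P : G.Path) : List V := (P.verts.drop 1).dropLast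

/-- The edge set of a path. -/
def Path.edgeSet (P : G.Path) : Set E := {e | e ∈ P.edges}

/-- The edge set of a cycle. -/
def Cycle.edgeSet (C : G.Cycle) : Set E := {e | e ∈ C.edges}

variable (G)

/-- `δ_G(X)`: the set of edges with exactly one endpoint in `X`. -/
def edgeCut (X : Set V) : Set E :=
  {e | ∃ u w, G.I e = s(u, w) ∧ u ∈ X ∧ w ∉ X}

/-- A grapht is *inner Eulerian* if there is no `X ⊆ V ∖ T` whose cut `δ(X)` is a
finite set of odd size. -/
def InnerEulerian : Prop :=
  ∀ X : Set V, Disjoint X G.T → ¬ ((G.edgeCut X).Finite ∧ Odd (G.edgeCut X).ncard)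

/-- An `AB`-path: a path with first vertex in `A`, last vertex in `B` and no internal
vertex in `A ∪ B`. -/
def IsABPath (A B : Set V) (P : G.Path) : Prop :=
  P.first ∈ A ∧ P.last ∈ B ∧ ∀ v ∈ P.inner, v ∉ A ∪ B

/-- A `T`-path: a path between two distinct terminal vertices without internal
terminal vertices. -/
def IsTPath (P : G.Path) : Prop :=
  P.first ∈ G.T ∧ P.last ∈ G.T ∧ P.first ≠ P.last ∧ ∀ v ∈ P.inner, v ∉ G.T

/-- A system of pairwise edge-disjoint paths. -/
def EdgeDisjoint (Ps : Set G.Path) : Prop :=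
  Ps.Pairwise fun P Q => ∀ e, e ∈ P.edges → e ∉ Q.edges

/-- A system of pairwise edge-disjoint `T`-paths. -/
def IsTPathSystem (Ps : Set G.Path) : Prop :=
  G.EdgeDisjoint Ps ∧ ∀ P ∈ Ps, G.IsTPath P

/-- The set of edges used by a path system. -/
def sysEdges (Ps : Set G.Path) : Set E := ⋃ P ∈ Ps, P.edgeSet

/-- `C` is *orthogonal* to the path system `Ps`: `C` consists of exactly one edge from
each path of `Ps`. -/
def Orthogonal (C : Set E) (Ps : Set G.Path) : Prop :=
  (∀ P ∈ Ps, ∃! e, e ∈ C ∧ e ∈ P.edges) ∧ ∀ e ∈ C, ∃ P ∈ Ps, e ∈ P.edges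

/-- `C` separates `A` and `B`: every `AB`-path meets `C` (i.e. `G − C` has no `AB`-path). -/
def Separates (C : Set E) (A B : Set V) : Prop :=
  ∀ P : G.Path, G.IsABPath A B P → ∃ e ∈ C, e ∈ P.edges

/-- An `AB`-cut. -/
def IsABCut (A B : Set V) (C : Set E) : Prop :=
  ∀ P : G.Path, G.IsABPath A B P → ∃ e ∈ C, e ∈ P.edges

/-- An Erdős–Menger `AB`-cut: an `AB`-cut orthogonal to some system of pairwise
edge-disjoint `AB`-paths. -/
def IsEMABCut (A B : Set V) (C : Set E) : Prop :=
  G.IsABCut A B C ∧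
    ∃ Ps : Set G.Path, G.EdgeDisjoint Ps ∧ (∀ P ∈ Ps, G.IsABPath A B P) ∧ G.Orthogonal C Ps

/-- The order `⊴` on (Erdős–Menger) `AB`-cuts: on every `AB`-path the first edge of `C`
comes no later than the first edge of `C'`. -/
def ABCutLE (A B : Set V) (C C' : Set E) : Prop :=
  ∀ P : G.Path, G.IsABPath A B P →
    ∀ i : Fin P.edges.length, P.edges.get i ∈ C' →
      ∃ j : Fin P.edges.length, (j : ℕ) ≤ (i : ℕ) ∧ P.edges.get j ∈ C

/-- `C` is the `⊴`-largest Erdős–Menger `AB`-cut. -/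
def IsLargestEMABCut (A B : Set V) (C : Set E) : Prop :=
  G.IsEMABCut A B C ∧ ∀ C', G.IsEMABCut A B C' → G.ABCutLE A B C' C

/-- A system `Ps` of pairwise edge-disjoint `T`-paths *links* the terminal `t`:
it covers `δ(t)`. -/
def Links (Ps : Set G.Path) (t : V) : Prop :=
  G.IsTPathSystem Ps ∧ ∀ e ∈ G.edgeCut {t}, ∃ P ∈ Ps, e ∈ P.edges

/-- The terminal `t` is linked. -/
def Linked (t : V) : Prop := ∃ Ps : Set G.Path, G.Links Ps t

/-- The linkability condition: every terminal is linked. -/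
def LinkabilityCondition : Prop := ∀ t ∈ G.T, G.Linked t

/-- A perfect linkage: a system of pairwise edge-disjoint `T`-paths linking every
terminal. -/
def IsPerfectLinkage (Ps : Set G.Path) : Prop :=
  G.IsTPathSystem Ps ∧ ∀ t ∈ G.T, ∀ e ∈ G.edgeCut {t}, ∃ P ∈ Ps, e ∈ P.edges

/-- In the two-terminal setting: a system of pairwise edge-disjoint `st`-paths
covering `δ(s)` (a linkage of `s`). -/
def IsStLinkage (s t : V) (Ps : Set G.Path) : Prop :=
  G.EdgeDisjoint Ps ∧ (∀ P ∈ Ps, G.IsABPath {s} {t} P) ∧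
    ∀ e ∈ G.edgeCut {s}, ∃ P ∈ Ps, e ∈ P.edges

/-- `s` is linked (two-terminal setting). -/
def StLinked (s t : V) : Prop := ∃ Ps : Set G.Path, G.IsStLinkage s t Ps

/-- `λ_G(A,B)`: the maximal number of pairwise edge-disjoint `AB`-paths. -/
noncomputable def lambda (A B : Set V) : ℕ :=
  sSup {n : ℕ | ∃ Ps : Set G.Path, G.EdgeDisjoint Ps ∧ (∀ P ∈ Ps, G.IsABPath A B P) ∧
    Ps.Finite ∧ Ps.ncard = n}

/-- The grapht obtained by deleting all edges outside `F`. -/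
def restrict (F : Set E) : Grapht V F where
  I e := G.I e.1
  loopless e := G.loopless e.1
  T := G.T
  T_nontrivial := G.T_nontrivial

/-- The map sending every vertex of a contracted set `X t` (`t ∈ T`) to `t`. -/
noncomputable def contractMap (X : V → Set V) : V → V := fun v =>
  letI := Classical.dec (∃ u ∈ G.T, v ∈ X u)
  if h : ∃ u ∈ G.T, v ∈ X u then h.choose else v

/-- The contraction `G/ℱ` of the family `ℱ = {X t : t ∈ T}`: each `X t` is contracted
to `t` and the arising loops are deleted. -/
noncomputable def contract (X : V → Set V) :
    Grapht V {e : E // ¬ ((G.I e).map (G.contractMap X)).IsDiag} where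
  I e := (G.I e.1).map (G.contractMap X)
  loopless e := e.2
  T := G.T
  T_nontrivial := G.T_nontrivial

end Grapht
namespace Grapht

variable {V : Type u} {E : Type v} {G : Grapht V E}

lemma IsWalk.ne_nil {vs : List V} {es : List E} (h : G.IsWalk vs es) : vs ≠ [] := by
  cases h <;> simp

lemma IsWalk.length_eq {vs : List V} {es : List E} (h : G.IsWalk vs es) :
    vs.length = es.length + 1 := by
  induction h with
  | nil v => simp
  | cons he hw ih => simpa using ih

lemma IsWalk.mem_of_mem_I {vs : List V} {es : List E} (h : G.IsWalk vs es)
    {e : E} (he : e ∈ es) {x : V} (hx : x ∈ G.I e) : x ∈ vs := by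
  induction h with
  | nil v => simp at he
  | cons hI hw ih =>
    rcases List.mem_cons.1 he with rfl | he'
    · rw [hI, Sym2.mem_iff] at hx
      rcases hx with rfl | rfl <;> simp
    · have := ih he'
      simp_all [List.mem_cons]

lemma IsWalk.append {vs1 vs2 : List V} {es1 es2 : List E} {m : V}
    (h1 : G.IsWalk vs1 es1) (hm : vs1.getLast? = some m)
    (h2 : G.IsWalk (m :: vs2) es2) : G.IsWalk (vs1 ++ vs2) (es1 ++ es2) := by
  induction h1 with
  | nil v =>
    simp only [List.getLast?_singleton, Option.some_inj] at hm
    subst hm; simpa using h2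
  | cons hI hw ih =>
    rw [List.getLast?_cons_cons] at hm
    exact IsWalk.cons hI (ih hm)

lemma IsWalk.concat {vs : List V} {es : List E} {m w : V} {e : E}
    (h : G.IsWalk vs es) (hm : vs.getLast? = some m) (hI : G.I e = s(m, w)) :
    G.IsWalk (vs ++ [w]) (es ++ [e]) :=
  h.append hm (IsWalk.cons hI (IsWalk.nil w))

lemma IsWalk.reverse {vs : List V} {es : List E} (h : G.IsWalk vs es) :
    G.IsWalk vs.reverse es.reverse := by
  induction h with
  | nil v => simpa using IsWalk.nil v
  | cons hI hw ih =>
    rename_i u w vs e es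
    have hlast : (w :: vs).reverse.getLast? = some w := by
      rw [List.getLast?_reverse]; rfl
    have : G.I e = s(w, u) := by rw [hI, Sym2.eq_swap]
    simpa using ih.concat hlast this

lemma IsWalk.drop {vs : List V} {es : List E} (h : G.IsWalk vs es)
    (i : ℕ) (hi : i < vs.length) : G.IsWalk (vs.drop i) (es.drop i) := by
  induction h generalizing i with
  | nil v =>
    simp only [List.length_singleton] at hi
    have : i = 0 := by omega
    subst this
    simpa using IsWalk.nil v
  | cons hI hw ih =>
    rename_i u w vs' e es'
    match i with
    | 0 => exact IsWalk.cons hI hw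
    | (j+1) =>
      have := ih j (by simp only [List.length_cons] at hi ⊢; omega)
      simpa using this

lemma IsWalk.take {vs : List V} {es : List E} (h : G.IsWalk vs es)
    (i : ℕ) : G.IsWalk (vs.take (i + 1)) (es.take i) := by
  induction h generalizing i with
  | nil v => match i with
    | 0 => simpa using IsWalk.nil v
    | (j+1) => simpa using IsWalk.nil v
  | cons hI hw ih =>
    match i with
    | 0 => simpa using IsWalk.nil _
    | (j+1) => exact IsWalk.cons hI (ih j)

lemma IsWalk.head?_eq {vs : List V} {es : List E} (h : G.IsWalk vs es) :
    ∃ a, vs.head? = some a := by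
  cases h <;> exact ⟨_, rfl⟩

lemma IsWalk.getLast_mem_I {vs : List V} {es : List E} (h : G.IsWalk vs es)
    (hne : es ≠ []) {b : V} (hb : vs.getLast? = some b) :
    ∃ e, es.getLast? = some e ∧ b ∈ G.I e := by
  induction h with
  | nil v => simp at hne
  | cons hI hw ih =>
    rename_i u w vs e es
    rw [List.getLast?_cons_cons] at hb
    by_cases hes : es = []
    · subst hes
      cases hw with
      | nil v' =>
        simp only [List.getLast?_singleton, Option.some_inj] at hb
        subst hb
        exact ⟨e, rfl, by rw [hI]; simp⟩
    · rcases ih hes hb with ⟨e', he1, he2⟩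
      exact ⟨e', by rw [List.getLast?_cons, he1]; cases es <;> simp_all, he2⟩

lemma IsWalk.head_mem_I {vs : List V} {es : List E} (h : G.IsWalk vs es)
    (hne : es ≠ []) {a : V} (ha : vs.head? = some a) :
    ∃ e, es.head? = some e ∧ a ∈ G.I e := by
  cases h with
  | nil v => simp at hne
  | cons hI hw =>
    simp only [List.head?_cons, Option.some_inj] at ha
    subst ha
    exact ⟨_, rfl, by rw [hI]; simp⟩

end Grapht
namespace Grapht

variable {V : Type u} {E : Type v} {G : Grapht V E}

lemma IsWalk.edges_nodup {vs : List V} {es : List E} (h : G.IsWalk vs es)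
    (hvs : vs.Nodup) : es.Nodup := by
  induction h with
  | nil v => simp
  | cons hI hw ih =>
    rename_i u w vs' e es'
    have hnd := (List.nodup_cons.1 hvs)
    refine List.nodup_cons.2 ⟨fun he => ?_, ih hnd.2⟩
    have : u ∈ w :: vs' := hw.mem_of_mem_I he (by rw [hI]; simp)
    exact hnd.1 this

lemma IsWalk.eq_head_of_mem_I_head {vs : List V} {es : List E} (h : G.IsWalk vs es)
    (hvs : vs.Nodup) {a : V} (ha : vs.head? = some a) {e : E} (he : e ∈ es)
    (hae : a ∈ G.I e) : es.head? = some e := by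
  cases h with
  | nil v => simp at he
  | cons hI hw =>
    rename_i u w vs' e0 es'
    simp only [List.head?_cons, Option.some_inj] at ha
    rcases List.mem_cons.1 he with rfl | he'
    · rfl
    · exfalso
      have hmem : a ∈ w :: vs' := hw.mem_of_mem_I he' hae
      rw [← ha] at hmem
      exact (List.nodup_cons.1 hvs).1 hmem

lemma IsWalk.eq_getLast_of_mem_I_getLast {vs : List V} {es : List E} (h : G.IsWalk vs es)
    (hvs : vs.Nodup) {b : V} (hb : vs.getLast? = some b) {e : E} (he : e ∈ es)
    (hbe : b ∈ G.I e) : es.getLast? = some e := by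
  have := h.reverse.eq_head_of_mem_I_head (by simpa using hvs)
    (by rw [List.head?_reverse]; exact hb) (by simpa using he) hbe
  rwa [List.head?_reverse] at this

lemma mem_edgeCut_iff {e : E} {u w : V} (hI : G.I e = s(u, w)) (X : Set V) :
    e ∈ G.edgeCut X ↔ ((u ∈ X ∧ w ∉ X) ∨ (w ∈ X ∧ u ∉ X)) := by
  constructor
  · rintro ⟨a, b, hab, haX, hbX⟩
    rw [hI, Sym2.eq_iff] at hab
    rcases hab with ⟨rfl, rfl⟩ | ⟨rfl, rfl⟩
    · exact Or.inl ⟨haX, hbX⟩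
    · exact Or.inr ⟨haX, hbX⟩
  · rintro (⟨h1, h2⟩ | ⟨h1, h2⟩)
    · exact ⟨u, w, hI, h1, h2⟩
    · exact ⟨w, u, by rw [hI, Sym2.eq_swap], h1, h2⟩

lemma mem_edgeCut_singleton {e : E} {x : V} :
    e ∈ G.edgeCut {x} ↔ x ∈ G.I e := by
  constructor
  · rintro ⟨u, w, hI, hu, hw⟩
    rcases hu with rfl
    rw [hI]; simp
  · intro hx
    refine ⟨x, Sym2.Mem.other hx, (Sym2.other_spec hx).symm, rfl, ?_⟩
    intro hmem
    have h : Sym2.Mem.other hx = x := hmem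
    apply G.loopless e
    rw [← Sym2.other_spec hx, h]
    simp [Sym2.isDiag_iff_proj_eq]

noncomputable def crossb (G : Grapht V E) (X : Set V) : E → Bool :=
  fun e => @decide (e ∈ G.edgeCut X) (Classical.propDecidable _)

lemma crossb_eq_true {X : Set V} {e : E} : G.crossb X e = true ↔ e ∈ G.edgeCut X := by
  simp [crossb]

lemma crossb_eq_false {X : Set V} {e : E} : G.crossb X e = false ↔ e ∉ G.edgeCut X := by
  simp [crossb]

lemma IsWalk.even_countP_iff {vs : List V} {es : List E} (h : G.IsWalk vs es)
    {a b : V} (ha : vs.head? = some a) (hb : vs.getLast? = some b) (X : Set V) :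
    Even (es.countP (G.crossb X)) ↔ (a ∈ X ↔ b ∈ X) := by
  induction h generalizing a with
  | nil v =>
    simp only [List.head?_cons, Option.some_inj] at ha
    simp only [List.getLast?_singleton, Option.some_inj] at hb
    subst ha; subst hb
    simp
  | cons hI hw ih =>
    rename_i u w vs' e es'
    simp only [List.head?_cons, Option.some_inj] at ha
    rw [ha] at hI
    rw [List.getLast?_cons_cons] at hb
    have ihw := ih rfl hb
    rw [List.countP_cons]
    by_cases hu : a ∈ X <;> by_cases hww : w ∈ X
    · have hc : G.crossb X e = false := by
        rw [crossb_eq_false, mem_edgeCut_iff hI]; tauto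
      simp [hc, ihw]; tauto
    · have hc : G.crossb X e = true := by
        rw [crossb_eq_true, mem_edgeCut_iff hI]; tauto
      simp [hc, Nat.even_add_one, ihw]; tauto
    · have hc : G.crossb X e = true := by
        rw [crossb_eq_true, mem_edgeCut_iff hI]; tauto
      simp [hc, Nat.even_add_one, ihw]; tauto
    · have hc : G.crossb X e = false := by
        rw [crossb_eq_false, mem_edgeCut_iff hI]; tauto
      simp [hc, ihw]; tauto

lemma exists_path_aux : ∀ (n : ℕ) (vs : List V) (es : List E), vs.length ≤ n →
    G.IsWalk vs es → ∀ a b, vs.head? = some a → vs.getLast? = some b →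
    ∃ vs' es', G.IsWalk vs' es' ∧ vs'.Nodup ∧ vs'.head? = some a ∧
      vs'.getLast? = some b ∧ (∀ e ∈ es', e ∈ es) ∧ (∀ v ∈ vs', v ∈ vs) := by
  intro n
  induction n with
  | zero =>
    intro vs es hlen h a b ha hb
    exfalso
    have := h.ne_nil
    cases vs
    · exact this rfl
    · simp at hlen
  | succ n ih =>
    intro vs es hlen h a b ha hb
    cases h with
    | nil v =>
      simp only [List.head?_cons, Option.some_inj] at ha
      simp only [List.getLast?_singleton, Option.some_inj] at hb
      exact ⟨[v], [], IsWalk.nil v, by simp, by simp [ha], by simp [hb], by simp, by simp⟩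
    | cons hI hw =>
      rename_i u w vs' e es'
      simp only [List.head?_cons, Option.some_inj] at ha
      rw [ha] at hI
      rw [List.getLast?_cons_cons] at hb
      by_cases hu : a ∈ w :: vs'
      · obtain ⟨l1, l2, hsplit⟩ := List.append_of_mem hu
        have hfull : G.IsWalk (a :: w :: vs') (e :: es') := IsWalk.cons hI hw
        have hidx : l1.length + 1 < (a :: w :: vs').length := by
          simp only [List.length_cons, hsplit, List.length_append, List.length_cons]
          omega
        have hdrop := hfull.drop (l1.length + 1) hidx
        have hvs_drop : (a :: w :: vs').drop (l1.length + 1) = a :: l2 := by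
          simp only [List.drop_succ_cons, hsplit]
          exact List.drop_left
        rw [hvs_drop] at hdrop
        have hlast2 : (a :: l2).getLast? = some b := by
          rw [hsplit] at hb
          rwa [List.getLast?_append_of_ne_nil _ (by simp)] at hb
        have hlen2 : (a :: l2).length ≤ n := by
          rw [hsplit] at hlen
          simp only [List.length_cons, List.length_append] at hlen ⊢
          omega
        obtain ⟨vs'', es'', h1, h2, h3, h4, h5, h6⟩ :=
          ih (a :: l2) _ hlen2 hdrop a b rfl hlast2
        refine ⟨vs'', es'', h1, h2, h3, h4, fun e' he' => ?_, fun v hv => ?_⟩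
        · exact List.mem_of_mem_drop (h5 e' he')
        · have : v ∈ a :: l2 := h6 v hv
          rcases List.mem_cons.1 this with rfl | hvv
          · simp [← ha]
          · have : v ∈ w :: vs' := by rw [hsplit]; simp [hvv]
            simp [this, List.mem_cons]
      · have hlen2 : (w :: vs').length ≤ n := by
          simp only [List.length_cons] at hlen ⊢; omega
        obtain ⟨vs'', es'', h1, h2, h3, h4, h5, h6⟩ :=
          ih (w :: vs') es' hlen2 hw w b rfl hb
        obtain ⟨vs''', rfl⟩ : ∃ t, vs'' = w :: t := by
          cases vs'' with
          | nil => simp at h3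
          | cons x xs => simp only [List.head?_cons, Option.some_inj] at h3; subst h3; exact ⟨xs, rfl⟩
        refine ⟨a :: w :: vs''', e :: es'', IsWalk.cons hI h1, ?_, rfl, ?_, ?_, ?_⟩
        · refine List.nodup_cons.2 ⟨fun hmem => hu (h6 a hmem), h2⟩
        · rw [List.getLast?_cons_cons]; exact h4
        · intro e' he'
          rcases List.mem_cons.1 he' with rfl | he''
          · simp
          · simp [List.mem_cons, h5 e' he'']
        · intro v hv
          rcases List.mem_cons.1 hv with rfl | hv'
          · simp [← ha]
          · simp [List.mem_cons.2 (Or.inr (h6 v hv'))]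

lemma IsWalk.exists_path {vs : List V} {es : List E} (h : G.IsWalk vs es)
    {a b : V} (ha : vs.head? = some a) (hb : vs.getLast? = some b) :
    ∃ vs' es', G.IsWalk vs' es' ∧ vs'.Nodup ∧ vs'.head? = some a ∧
      vs'.getLast? = some b ∧ (∀ e ∈ es', e ∈ es) ∧ (∀ v ∈ vs', v ∈ vs) :=
  exists_path_aux vs.length vs es le_rfl h a b ha hb

/-- Reachability via walks whose edges all lie in `S`. -/
def ReachIn (G : Grapht V E) (S : Set E) (x y : V) : Prop :=
  ∃ vs es, G.IsWalk vs es ∧ (∀ e ∈ es, e ∈ S) ∧ vs.head? = some x ∧ vs.getLast? = some y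

lemma ReachIn.refl (G : Grapht V E) (S : Set E) (x : V) : G.ReachIn S x x :=
  ⟨[x], [], IsWalk.nil x, by simp, rfl, rfl⟩

lemma ReachIn.symm {S : Set E} {x y : V} (h : G.ReachIn S x y) : G.ReachIn S y x := by
  obtain ⟨vs, es, h1, h2, h3, h4⟩ := h
  exact ⟨vs.reverse, es.reverse, h1.reverse, fun e he => h2 e (by simpa using he),
    by rwa [List.head?_reverse], by rwa [List.getLast?_reverse]⟩

lemma ReachIn.trans {S : Set E} {x y z : V} (h : G.ReachIn S x y) (h' : G.ReachIn S y z) :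
    G.ReachIn S x z := by
  obtain ⟨vs1, es1, h1, h2, h3, h4⟩ := h
  obtain ⟨vs2, es2, g1, g2, g3, g4⟩ := h'
  obtain ⟨vs2', rfl⟩ : ∃ t, vs2 = y :: t := by
    cases vs2 with
    | nil => simp at g3
    | cons x xs => simp only [List.head?_cons, Option.some_inj] at g3; exact ⟨xs, by rw [g3]⟩
  refine ⟨vs1 ++ vs2', es1 ++ es2, h1.append h4 g1, ?_, ?_, ?_⟩
  · intro e he; rcases List.mem_append.1 he with h' | h'
    · exact h2 e h'
    · exact g2 e h'
  · cases vs1 with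
    | nil => simp at h3
    | cons x xs => simpa using h3
  · cases vs2' with
    | nil =>
      simp only [List.getLast?_singleton, Option.some_inj] at g4
      subst g4; simpa using h4
    | cons c cs =>
      rw [List.getLast?_append_of_ne_nil _ (by simp)]
      rw [List.getLast?_cons_cons] at g4
      exact g4

lemma ReachIn.extend {S : Set E} {x y z : V} {e : E} (h : G.ReachIn S x y)
    (hI : G.I e = s(y, z)) (heS : e ∈ S) : G.ReachIn S x z :=
  h.trans ⟨[y, z], [e], IsWalk.cons hI (IsWalk.nil z), by simpa using heS, rfl, rfl⟩

lemma IsWalk.reachIn_getLast {vs : List V} {es : List E} (h : G.IsWalk vs es)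
    {S : Set E} (hS : ∀ e ∈ es, e ∈ S) {v b : V} (hv : v ∈ vs)
    (hb : vs.getLast? = some b) : G.ReachIn S v b := by
  obtain ⟨l1, l2, hsplit⟩ := List.append_of_mem hv
  have hidx : l1.length < vs.length := by
    rw [hsplit]; simp only [List.length_append, List.length_cons]; omega
  have hdrop := h.drop l1.length hidx
  have hvs : vs.drop l1.length = v :: l2 := by rw [hsplit]; exact List.drop_left
  rw [hvs] at hdrop
  refine ⟨v :: l2, es.drop l1.length, hdrop, fun e he => hS e (List.mem_of_mem_drop he), rfl, ?_⟩
  rw [hsplit] at hb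
  rwa [List.getLast?_append_of_ne_nil _ (by simp)] at hb

end Grapht
namespace Grapht

variable {V : Type u} {E : Type v} {G : Grapht V E}

lemma nodup_getLast_not_mem_dropLast {α : Type*} {l : List α} {b : α}
    (h : l.Nodup) (hb : l.getLast? = some b) : b ∉ l.dropLast := by
  intro hmem
  have hne : l ≠ [] := by rintro rfl; simp at hb
  have heq := List.dropLast_append_getLast hne
  have hb' : l.getLast hne = b := by
    rw [List.getLast?_eq_getLast hne, Option.some_inj] at hb; exact hb
  rw [← heq] at h
  rw [hb'] at h
  exact (List.disjoint_of_nodup_append h) hmem (by simp)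

lemma Path.edges_nodup (P : G.Path) : P.edges.Nodup := P.isWalk.edges_nodup P.nodup

lemma Path.verts_eq (P : G.Path) : ∃ rest, P.verts = P.first :: rest := by
  have := P.head_eq
  cases h : P.verts with
  | nil => rw [h] at this; simp at this
  | cons x xs =>
    rw [h] at this
    simp only [List.head?_cons, Option.some_inj] at this
    exact ⟨xs, by rw [this]⟩

lemma Path.ne_first_of_mem_inner (P : G.Path) {v : V} (hv : v ∈ P.inner) :
    v ≠ P.first := by
  obtain ⟨rest, hrest⟩ := P.verts_eq
  have hnd := P.nodup
  rw [hrest] at hnd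
  have hv' : v ∈ P.verts.drop 1 := List.dropLast_subset _ hv
  rw [hrest] at hv'
  simp only [List.drop_succ_cons, List.drop_zero] at hv'
  intro h
  subst h
  exact (List.nodup_cons.1 hnd).1 hv'

lemma Path.ne_last_of_mem_inner (P : G.Path) {v : V} (hv : v ∈ P.inner) :
    v ≠ P.last := by
  obtain ⟨rest, hrest⟩ := P.verts_eq
  unfold Path.inner at hv
  rw [hrest] at hv
  simp only [List.drop_succ_cons, List.drop_zero] at hv
  intro h
  subst h
  cases hr : rest with
  | nil => rw [hr] at hv; simp at hv
  | cons x xs =>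
    have hlast : rest.getLast? = some P.last := by
      have := P.getLast_eq
      rw [hrest] at this
      rw [hr] at this ⊢
      rwa [List.getLast?_cons_cons] at this
    have hnd : rest.Nodup := by
      have := P.nodup; rw [hrest] at this; exact (List.nodup_cons.1 this).2
    exact nodup_getLast_not_mem_dropLast hnd hlast hv

lemma Path.isABPath_of (P : G.Path) {s t : V} (h1 : P.first = s) (h2 : P.last = t) :
    G.IsABPath {s} {t} P := by
  refine ⟨by simp [h1], by simp [h2], fun v hv hmem => ?_⟩
  rcases hmem with hmem | hmem
  · exact P.ne_first_of_mem_inner hv (by rw [h1]; exact hmem)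
  · exact P.ne_last_of_mem_inner hv (by rw [h2]; exact hmem)

lemma Path.edges_ne_nil (P : G.Path) (h : P.first ≠ P.last) : P.edges ≠ [] := by
  intro hnil
  have hlen := P.isWalk.length_eq
  rw [hnil] at hlen
  simp only [List.length_nil, Nat.zero_add] at hlen
  obtain ⟨v, hv⟩ := List.length_eq_one_iff.1 hlen
  have h1 := P.head_eq
  have h2 := P.getLast_eq
  rw [hv] at h1 h2
  simp only [List.head?_cons, List.getLast?_singleton, Option.some_inj] at h1 h2
  exact h (h1.symm.trans h2)

lemma Path.head_edge (P : G.Path) {e : E} (he : e ∈ P.edges) (hf : P.first ∈ G.I e) :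
    P.edges.head? = some e :=
  P.isWalk.eq_head_of_mem_I_head P.nodup P.head_eq he hf

lemma even_sum_of_forall_even {l : List ℕ} (h : ∀ x ∈ l, Even x) : Even l.sum := by
  induction l with
  | nil => simp
  | cons x xs ih =>
    rw [List.sum_cons]
    exact (h x (by simp)).add (ih fun y hy => h y (List.mem_cons_of_mem _ hy))

/-- The key parity contradiction: a cut `δ(X)` consisting of one edge `g` plus
edges of finitely many lists each crossing evenly is odd and finite. -/
lemma cut_contra {s t : V} (hG : G.InnerEulerian) (hT : G.T = {s, t})
    {X : Set V} (hsX : s ∉ X) (htX : t ∉ X) {g : E} (hg : g ∈ G.edgeCut X)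
    {ls : List (List E)} (hnd : (ls.flatten).Nodup) (hgf : g ∉ ls.flatten)
    (heven : ∀ l ∈ ls, Even (l.countP (G.crossb X)))
    (hcover : ∀ e ∈ G.edgeCut X, e = g ∨ ∃ l ∈ ls, e ∈ l) : False := by
  classical
  set L0 : List E := g :: (ls.flatten).filter (G.crossb X) with hL0
  have hmemL0 : ∀ e, e ∈ L0 ↔ e ∈ G.edgeCut X := by
    intro e
    constructor
    · intro he
      rcases List.mem_cons.1 he with rfl | he'
      · exact hg
      · exact crossb_eq_true.1 (List.of_mem_filter he')
    · intro he
      rcases hcover e he with rfl | ⟨l, hl, hel⟩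
      · simp [hL0]
      · refine List.mem_cons_of_mem _ (List.mem_filter.2 ⟨?_, crossb_eq_true.2 he⟩)
        exact List.mem_flatten.2 ⟨l, hl, hel⟩
  have hndL0 : L0.Nodup := by
    refine List.nodup_cons.2 ⟨fun hc => hgf (List.mem_of_mem_filter hc), hnd.filter _⟩
  have hset : G.edgeCut X = {e | e ∈ L0} := by
    ext e; simp [hmemL0 e]
  have hfin : (G.edgeCut X).Finite := by rw [hset]; exact L0.finite_toSet
  have hodd : Odd (G.edgeCut X).ncard := by
    have h1 : (G.edgeCut X).ncard = L0.length := by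
      rw [hset]
      have : ({e | e ∈ L0} : Set E) = ↑L0.toFinset := by ext e; simp
      rw [this, Set.ncard_coe_finset, List.toFinset_card_of_nodup hndL0]
    rw [h1, hL0, List.length_cons]
    rw [Nat.odd_add_one]
    rw [Nat.not_odd_iff_even]
    have h2 : ((ls.flatten).filter (G.crossb X)).length = (ls.flatten).countP (G.crossb X) := by
      rw [List.countP_eq_length_filter]
    rw [h2, List.countP_flatten]
    apply even_sum_of_forall_even
    intro x hx
    rw [List.mem_map] at hx
    obtain ⟨l, hl, rfl⟩ := hx
    exact heven l hl
  have hdisj : Disjoint X G.T := by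
    rw [hT, Set.disjoint_right]
    rintro x (rfl | rfl) <;> assumption
  exact hG X hdisj ⟨hfin, hodd⟩

/-- A linkage of `s` relative to the remaining edge set `F`. -/
def LinkIn (G : Grapht V E) (s t : V) (F : Set E) (L : Set G.Path) : Prop :=
  (∀ P ∈ L, G.IsABPath {s} {t} P) ∧ (∀ P ∈ L, ∀ e ∈ P.edges, e ∈ F) ∧
    G.EdgeDisjoint L ∧ ∀ e ∈ F, e ∈ G.edgeCut {s} → ∃ P ∈ L, e ∈ P.edges

/-- State of the recursive construction. -/
structure LSt (G : Grapht V E) where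
  paths : List G.Path
  cycs : List G.Cycle

def LSt.avail (σ : LSt G) : Set E :=
  {e | (∀ P ∈ σ.paths, e ∉ P.edges) ∧ ∀ C ∈ σ.cycs, e ∉ C.edges}

def LSt.Inv (s t : V) (σ : LSt G) : Prop :=
  (∀ P ∈ σ.paths, G.IsABPath {s} {t} P) ∧
  (σ.paths.Pairwise fun P Q => ∀ e ∈ P.edges, e ∉ Q.edges) ∧
  (σ.cycs.Pairwise fun C D => ∀ e ∈ C.edges, e ∉ D.edges) ∧
  (∀ P ∈ σ.paths, ∀ C ∈ σ.cycs, ∀ e ∈ P.edges, e ∉ C.edges) ∧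
  (∃ L, G.LinkIn s t σ.avail L) ∧
  (∀ C ∈ σ.cycs, ∀ e ∈ C.edges, e ∉ G.edgeCut {s})

end Grapht
namespace Grapht

variable {V : Type u} {E : Type v} {G : Grapht V E}

lemma LinkIn.diff {s t : V} {F F' : Set E} {L : Set G.Path} (hL : G.LinkIn s t F L)
    {P : G.Path} (hP : P ∈ L) (hsub : ∀ e ∈ F', e ∈ F)
    (hdiff : ∀ P' ∈ L, P' ≠ P → ∀ e ∈ P'.edges, e ∈ F')
    (hPdead : ∀ e ∈ P.edges, e ∈ G.edgeCut {s} → e ∉ F') :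
    G.LinkIn s t F' (L \ {P}) := by
  obtain ⟨h1, h2, h3, h4⟩ := hL
  refine ⟨fun P' hP' => h1 P' hP'.1, fun P' hP' => hdiff P' hP'.1 hP'.2, ?_, ?_⟩
  · exact h3.mono Set.diff_subset
  · intro e heF' hecut
    obtain ⟨P'', hP'', he''⟩ := h4 e (hsub e heF') hecut
    by_cases hpp : P'' = P
    · subst hpp
      exact absurd heF' (hPdead e he'' hecut)
    · exact ⟨P'', ⟨hP'', hpp⟩, he''⟩

lemma LSt.Inv.add_path {s t : V} {σ : LSt G} (hσ : σ.Inv s t) {Q : G.Path}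
    (hQab : G.IsABPath {s} {t} Q) (hQav : ∀ e ∈ Q.edges, e ∈ σ.avail)
    (hlink : ∃ L', G.LinkIn s t (LSt.avail ⟨Q :: σ.paths, σ.cycs⟩) L') :
    LSt.Inv s t (⟨Q :: σ.paths, σ.cycs⟩ : LSt G) := by
  obtain ⟨i1, i2, i3, i4, _, i6⟩ := hσ
  refine ⟨?_, ?_, i3, ?_, hlink, i6⟩
  · intro P hP
    rcases List.mem_cons.1 hP with rfl | hP'
    · exact hQab
    · exact i1 P hP'
  · refine List.pairwise_cons.2 ⟨fun P hP e he => ?_, i2⟩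
    exact (hQav e he).1 P hP
  · intro P hP C hC e he
    rcases List.mem_cons.1 hP with rfl | hP'
    · exact (hQav e he).2 C hC
    · exact i4 P hP' C hC e he

lemma LSt.Inv.add_cycle {s t : V} {σ : LSt G} (hσ : σ.Inv s t) {C : G.Cycle}
    (hCav : ∀ e ∈ C.edges, e ∈ σ.avail) (hCs : ∀ e ∈ C.edges, e ∉ G.edgeCut {s})
    (hlink : ∃ L', G.LinkIn s t (LSt.avail ⟨σ.paths, C :: σ.cycs⟩) L') :
    LSt.Inv s t (⟨σ.paths, C :: σ.cycs⟩ : LSt G) := by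
  obtain ⟨i1, i2, i3, i4, _, i6⟩ := hσ
  refine ⟨i1, i2, ?_, ?_, hlink, ?_⟩
  · refine List.pairwise_cons.2 ⟨fun D hD e he => ?_, i3⟩
    exact (hCav e he).2 D hD
  · intro P hP C' hC' e he
    rcases List.mem_cons.1 hC' with rfl | hC''
    · intro heC
      exact (hCav e heC).1 P hP he
    · exact i4 P hP C' hC'' e he
  · intro C' hC'
    rcases List.mem_cons.1 hC' with rfl | hC''
    · exact hCs
    · exact i6 C' hC''

lemma avail_cons_path {σ : LSt G} {Q : G.Path} {e : E} :
    e ∈ LSt.avail ⟨Q :: σ.paths, σ.cycs⟩ ↔ e ∈ σ.avail ∧ e ∉ Q.edges := by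
  constructor
  · intro ⟨h1, h2⟩
    exact ⟨⟨fun P hP => h1 P (List.mem_cons_of_mem _ hP), h2⟩, h1 Q (by simp)⟩
  · intro ⟨⟨h1, h2⟩, h3⟩
    refine ⟨fun P hP => ?_, h2⟩
    rcases List.mem_cons.1 hP with rfl | hP'
    · exact h3
    · exact h1 P hP'

lemma avail_cons_cycle {σ : LSt G} {C : G.Cycle} {e : E} :
    e ∈ LSt.avail ⟨σ.paths, C :: σ.cycs⟩ ↔ e ∈ σ.avail ∧ e ∉ C.edges := by
  constructor
  · intro ⟨h1, h2⟩
    exact ⟨⟨h1, fun D hD => h2 D (List.mem_cons_of_mem _ hD)⟩, h2 C (by simp)⟩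
  · intro ⟨⟨h1, h2⟩, h3⟩
    refine ⟨h1, fun D hD => ?_⟩
    rcases List.mem_cons.1 hD with rfl | hD'
    · exact h3
    · exact h2 D hD'

/-- Consuming a path of the current linkage. -/
lemma LSt.Inv.consume_path {s t : V} {σ : LSt G} (hσ : σ.Inv s t) {L : Set G.Path}
    (hL : G.LinkIn s t σ.avail L) {P : G.Path} (hP : P ∈ L) :
    LSt.Inv s t (⟨P :: σ.paths, σ.cycs⟩ : LSt G) := by
  refine hσ.add_path (hL.1 P hP) (fun e he => hL.2.1 P hP e he) ⟨L \ {P}, ?_⟩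
  refine hL.diff hP (fun e he => (avail_cons_path.1 he).1) ?_ ?_
  · intro P' hP' hne e he
    refine avail_cons_path.2 ⟨hL.2.1 P' hP' e he, fun heP => ?_⟩
    exact hL.2.2.1 hP hP' (fun h => hne (h.symm)) e heP he
  · intro e he _ hmem
    exact (avail_cons_path.1 hmem).2 he


end Grapht
namespace Grapht

variable {V : Type u} {E : Type v} {G : Grapht V E}

lemma nodup_flatten_of {α : Type*} {L : List (List α)} (h1 : ∀ l ∈ L, l.Nodup)
    (h2 : L.Pairwise fun l l' => ∀ a ∈ l, a ∉ l') : L.flatten.Nodup := by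
  rw [List.nodup_flatten]
  exact ⟨h1, h2.imp fun h => fun a ha ha' => h a ha ha'⟩

lemma take_append_cons {α : Type*} (l1 l2 : List α) (y : α) :
    (l1 ++ y :: l2).take (l1.length + 1) = l1 ++ [y] := by
  rw [List.take_append]
  simp

/-- The main `t`-side step: an available edge `g` at `t` not used by the current
linkage can be put either on a rerouted path or on a cycle. -/
lemma t_step {s t : V} (hG : G.InnerEulerian) (hT : G.T = {s, t}) (hst : s ≠ t)
    {σ : LSt G} (hσ : σ.Inv s t) {L : Set G.Path} (hL : G.LinkIn s t σ.avail L)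
    {g : E} (hgav : g ∈ σ.avail) (hgt : g ∈ G.edgeCut {t}) (hgs : g ∉ G.edgeCut {s})
    (hgL : ∀ P ∈ L, g ∉ P.edges) :
    (∃ Q : G.Path, g ∈ Q.edges ∧ LSt.Inv s t (⟨Q :: σ.paths, σ.cycs⟩ : LSt G)) ∨
    (∃ C : G.Cycle, g ∈ C.edges ∧ LSt.Inv s t (⟨σ.paths, C :: σ.cycs⟩ : LSt G)) := by
  classical
  have htIg : t ∈ G.I g := mem_edgeCut_singleton.1 hgt
  set u := Sym2.Mem.other htIg with hu
  have hIg : G.I g = s(t, u) := (Sym2.other_spec htIg).symm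
  have hut : u ≠ t := by
    intro h
    exact G.loopless g (by rw [hIg, h]; simp [Sym2.isDiag_iff_proj_eq])
  have hus : u ≠ s := by
    intro h
    exact hgs (mem_edgeCut_singleton.2 (by rw [hIg, h]; simp))
  have hIgu : G.I g = s(u, t) := by rw [hIg, Sym2.eq_swap]
  set S' : Set E := {e | e ∈ σ.avail ∧ (∀ P ∈ L, e ∉ P.edges) ∧ e ≠ g} with hS'
  set X : Set V := {v | G.ReachIn S' u v} with hX
  have huX : u ∈ X := ReachIn.refl G S' u
  have hSnots : ∀ e ∈ S', e ∉ G.edgeCut {s} := by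
    intro e heS hecut
    obtain ⟨P, hP, heP⟩ := hL.2.2.2 e heS.1 hecut
    exact heS.2.1 P hP heP
  have hsX : s ∉ X := by
    intro hs'
    obtain ⟨vs, es, hw, hes, hhead, hlast⟩ := hs'
    cases hes' : es with
    | nil =>
      subst hes'
      cases hw with
      | nil v =>
        simp only [List.head?_cons, List.getLast?_singleton, Option.some_inj] at hhead hlast
        exact hus (hhead ▸ hlast)
    | cons e es0 =>
      obtain ⟨eL, heL, hsIeL⟩ := hw.getLast_mem_I (by rw [hes']; simp) hlast
      have heLes : eL ∈ es := List.mem_of_getLast? heL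
      exact hSnots eL (hes eL heLes) (mem_edgeCut_singleton.2 hsIeL)
  by_cases htX : t ∈ X
  · -- cycle through g
    right
    obtain ⟨vs, es, hw, hes, hhead, hlast⟩ := htX
    obtain ⟨vs', es', hw', hnd', hh', hl', hsubE, _⟩ := hw.exists_path hhead hlast
    have hesS : ∀ e ∈ es', e ∈ S' := fun e he => hes e (hsubE e he)
    obtain ⟨rest, rfl⟩ : ∃ r, vs' = u :: r := by
      cases vs' with
      | nil => simp at hh'
      | cons a as =>
        simp only [List.head?_cons, Option.some_inj] at hh'
        exact ⟨as, by rw [hh']⟩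
    have walkC : G.IsWalk (t :: u :: rest) (g :: es') := IsWalk.cons hIg hw'
    have hgnotes : g ∉ es' := fun h => (hesS g h).2.2 rfl
    set C : G.Cycle :=
      { verts := t :: u :: rest
        edges := g :: es'
        isWalk := walkC
        closed := by
          rw [List.getLast?_cons_cons, List.head?_cons]
          exact hl'.symm
        nontrivial := by simp
        edges_nodup := List.nodup_cons.2 ⟨hgnotes, hw'.edges_nodup hnd'⟩
        tail_nodup := by simpa using hnd' } with hC
    have hCedges : ∀ e ∈ C.edges, e = g ∨ e ∈ S' := by
      intro e he
      rcases List.mem_cons.1 he with rfl | he'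
      · exact Or.inl rfl
      · exact Or.inr (hesS e he')
    have hCav : ∀ e ∈ C.edges, e ∈ σ.avail := by
      intro e he
      rcases hCedges e he with rfl | h
      · exact hgav
      · exact h.1
    have hCs : ∀ e ∈ C.edges, e ∉ G.edgeCut {s} := by
      intro e he
      rcases hCedges e he with rfl | h
      · exact hgs
      · exact hSnots e h
    refine ⟨C, by simp [hC], hσ.add_cycle hCav hCs ⟨L, ?_, ?_, hL.2.2.1, ?_⟩⟩
    · exact hL.1
    · intro P hP e he
      refine avail_cons_cycle.2 ⟨hL.2.1 P hP e he, fun heC => ?_⟩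
      rcases hCedges e heC with rfl | h
      · exact hgL P hP he
      · exact h.2.1 P hP he
    · intro e he hecut
      exact hL.2.2.2 e (avail_cons_cycle.1 he).1 hecut
  · by_cases hPX : ∃ P ∈ L, ∃ v ∈ P.verts, v ∈ X
    · -- reroute a linkage path through `X` and `g`
      left
      obtain ⟨P, hPL, y, hyP, hyX⟩ := hPX
      have hPab := hL.1 P hPL
      have hPfirst : P.first = s := hPab.1
      have hPlast : P.last = t := hPab.2.1
      obtain ⟨l1, l2, hsplit⟩ := List.append_of_mem hyP
      have hyt : y ≠ t := fun h => htX (h ▸ hyX)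
      have hys : y ≠ s := fun h => hsX (h ▸ hyX)
      -- the prefix walk of P up to y
      have hw1 := P.isWalk.take l1.length
      rw [hsplit, take_append_cons] at hw1
      have htl1 : t ∉ l1 ++ [y] := by
        intro hmem
        have hPlast' : P.verts.getLast? = some t := by rw [P.getLast_eq, hPlast]
        rw [hsplit, List.getLast?_append_of_ne_nil _ (by simp)] at hPlast'
        have htyl2 : t ∈ y :: l2 := List.mem_of_getLast? hPlast'
        have hnd := P.nodup
        rw [hsplit] at hnd
        rcases List.mem_append.1 hmem with h | h
        · exact (List.disjoint_of_nodup_append hnd) h htyl2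
        · simp only [List.mem_singleton] at h
          exact hyt h.symm
      -- the walk from y to u inside X
      obtain ⟨vs2, es2, hw2, hes2, hh2, hl2⟩ := hyX.symm
      obtain ⟨vs2', rfl⟩ : ∃ r, vs2 = y :: r := by
        cases vs2 with
        | nil => simp at hh2
        | cons a as =>
          simp only [List.head?_cons, Option.some_inj] at hh2
          exact ⟨as, by rw [hh2]⟩
      have hvs2X : ∀ v ∈ y :: vs2', v ∈ X := by
        intro v hv
        exact (hw2.reachIn_getLast hes2 hv hl2).symm
      have hlast1 : (l1 ++ [y]).getLast? = some y := by
        rw [List.getLast?_append_of_ne_nil _ (by simp)]; rfl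
      have hW1 : G.IsWalk ((l1 ++ [y]) ++ vs2') (P.edges.take l1.length ++ es2) :=
        hw1.append hlast1 hw2
      have hlastW1 : ((l1 ++ [y]) ++ vs2').getLast? = some u := by
        cases vs2' with
        | nil =>
          simp only [List.getLast?_singleton, Option.some_inj] at hl2
          rw [List.append_nil, hlast1, hl2]
        | cons a as =>
          rw [List.getLast?_append_of_ne_nil _ (by simp)]
          rw [List.getLast?_cons_cons] at hl2
          exact hl2
      have hW : G.IsWalk ((((l1 ++ [y]) ++ vs2')) ++ [t])
          ((P.edges.take l1.length ++ es2) ++ [g]) := hW1.concat hlastW1 hIgu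
      have hheadW : (((l1 ++ [y]) ++ vs2') ++ [t]).head? = some s := by
        cases hl1 : l1 with
        | nil =>
          exfalso
          have := P.head_eq
          rw [hsplit, hl1, hPfirst] at this
          simp only [List.nil_append, List.head?_cons, Option.some_inj] at this
          exact hys this
        | cons c l1' =>
          have := P.head_eq
          rw [hsplit, hl1, hPfirst] at this
          simp only [List.cons_append, List.head?_cons, Option.some_inj] at this ⊢
          exact this
      have hlastW : ((((l1 ++ [y]) ++ vs2')) ++ [t]).getLast? = some t := by
        rw [List.getLast?_append_of_ne_nil _ (by simp)]; rfl
      obtain ⟨vsQ, esQ, hwQ, hndQ, hhQ, hlQ, hsubEQ, _⟩ := hW.exists_path hheadW hlastW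
      set Q : G.Path := ⟨s, t, vsQ, esQ, hwQ, hndQ, hhQ, hlQ⟩ with hQ
      have hEQ : ∀ e ∈ esQ, e ∈ P.edges.take l1.length ∨ e ∈ es2 ∨ e = g := by
        intro e he
        rcases List.mem_append.1 (hsubEQ e he) with h | h
        · rcases List.mem_append.1 h with h' | h'
          · exact Or.inl h'
          · exact Or.inr (Or.inl h')
        · simp only [List.mem_singleton] at h
          exact Or.inr (Or.inr h)
      have hQne : esQ ≠ [] := Q.edges_ne_nil hst
      -- g is the last edge of Q
      have hgQ : g ∈ esQ := by
        obtain ⟨eL, heLgl, htIeL⟩ := hwQ.getLast_mem_I hQne hlQ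
        have heLQ : eL ∈ esQ := List.mem_of_getLast? heLgl
        rcases hEQ eL heLQ with h | h | h
        · exfalso
          exact htl1 (hw1.mem_of_mem_I h htIeL)
        · exfalso
          exact htX (hvs2X t (hw2.mem_of_mem_I h htIeL))
        · exact h ▸ heLQ
      -- the first edge of Q is the first edge of P
      obtain ⟨e0, he0h, hsIe0⟩ := hwQ.head_mem_I hQne hhQ
      have he0Q : e0 ∈ esQ := List.mem_of_mem_head? (by rw [he0h]; rfl)
      have he0P : P.edges.head? = some e0 := by
        rcases hEQ e0 he0Q with h | h | h
        · exact P.head_edge (List.mem_of_mem_take h) (hPfirst ▸ hsIe0)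
        · exact absurd (hvs2X s (hw2.mem_of_mem_I h hsIe0)) hsX
        · exfalso
          subst h
          rw [hIg, Sym2.mem_iff] at hsIe0
          rcases hsIe0 with h' | h'
          · exact hst h'
          · exact hus h'.symm
      have hPs_in_Q : ∀ e ∈ P.edges, e ∈ G.edgeCut {s} → e ∈ esQ := by
        intro e he hc
        have : P.edges.head? = some e :=
          P.head_edge he (hPfirst ▸ mem_edgeCut_singleton.1 hc)
        rw [he0P, Option.some_inj] at this
        exact this ▸ he0Q
      have hQav : ∀ e ∈ esQ, e ∈ σ.avail := by
        intro e he
        rcases hEQ e he with h | h | h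
        · exact hL.2.1 P hPL e (List.mem_of_mem_take h)
        · exact (hes2 e h).1
        · exact h ▸ hgav
      have hQnotL' : ∀ P' ∈ L, P' ≠ P → ∀ e ∈ esQ, e ∉ P'.edges := by
        intro P' hP' hne e he hmem
        rcases hEQ e he with h | h | h
        · exact hL.2.2.1 hP' hPL hne e hmem (List.mem_of_mem_take h)
        · exact (hes2 e h).2.1 P' hP' hmem
        · exact hgL P' hP' (h ▸ hmem)
      refine ⟨Q, hgQ, hσ.add_path (Q.isABPath_of rfl rfl) hQav ⟨L \ {P}, ?_⟩⟩
      refine hL.diff hPL (fun e he => (avail_cons_path.1 he).1) ?_ ?_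
      · intro P' hP' hne e he
        refine avail_cons_path.2 ⟨hL.2.1 P' hP' e he, fun heQ => ?_⟩
        exact hQnotL' P' hP' hne e heQ he
      · intro e he hcut hmem
        exact (avail_cons_path.1 hmem).2 (hPs_in_Q e he hcut)
    · -- impossible: `δ(X)` would be an odd finite cut
      exfalso
      push_neg at hPX
      set ls : List (List E) := σ.paths.map (·.edges) ++ σ.cycs.map (·.edges) with hls
      obtain ⟨i1, i2, i3, i4, _, _⟩ := hσ
      have hnotavail : ∀ e : E, e ∉ σ.avail → ∃ l ∈ ls, e ∈ l := by
        intro e he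
        rw [LSt.avail, Set.mem_setOf_eq, not_and_or] at he
        rcases he with he | he
        · push_neg at he
          obtain ⟨P, hP, heP⟩ := he
          exact ⟨P.edges, by rw [hls]; exact List.mem_append_left _ (List.mem_map_of_mem hP), heP⟩
        · push_neg at he
          obtain ⟨C, hC, heC⟩ := he
          exact ⟨C.edges, by rw [hls]; exact List.mem_append_right _ (List.mem_map_of_mem hC), heC⟩
      refine cut_contra (s := s) (t := t) hG hT hsX htX (X := X) (g := g) (ls := ls)
        ⟨u, t, hIgu, huX, htX⟩ ?_ ?_ ?_ ?_
      · -- flatten nodup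
        apply nodup_flatten_of
        · intro l hl
          rw [hls] at hl
          rcases List.mem_append.1 hl with h | h
          · obtain ⟨P, _, rfl⟩ := List.mem_map.1 h
            exact P.edges_nodup
          · obtain ⟨C, _, rfl⟩ := List.mem_map.1 h
            exact C.edges_nodup
        · rw [hls]
          rw [List.pairwise_append]
          refine ⟨List.pairwise_map.2 (i2.imp fun h => h), List.pairwise_map.2 (i3.imp fun h => h), ?_⟩
          intro l hl l' hl'
          obtain ⟨P, hP, rfl⟩ := List.mem_map.1 hl
          obtain ⟨C, hC, rfl⟩ := List.mem_map.1 hl'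
          exact i4 P hP C hC
      · -- g not in flatten
        intro hmem
        obtain ⟨l, hl, hgl⟩ := List.mem_flatten.1 hmem
        rw [hls] at hl
        rcases List.mem_append.1 hl with h | h
        · obtain ⟨P, hP, rfl⟩ := List.mem_map.1 h
          exact hgav.1 P hP hgl
        · obtain ⟨C, hC, rfl⟩ := List.mem_map.1 h
          exact hgav.2 C hC hgl
      · -- even crossings
        intro l hl
        rw [hls] at hl
        rcases List.mem_append.1 hl with h | h
        · obtain ⟨P, hP, rfl⟩ := List.mem_map.1 h
          rw [P.isWalk.even_countP_iff P.head_eq P.getLast_eq X]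
          have h1 : P.first = s := (i1 P hP).1
          have h2 : P.last = t := (i1 P hP).2.1
          rw [h1, h2]
          simp [hsX, htX]
        · obtain ⟨C, hC, rfl⟩ := List.mem_map.1 h
          obtain ⟨a, ha⟩ := C.isWalk.head?_eq
          rw [C.isWalk.even_countP_iff ha (C.closed ▸ ha) X]
      · -- cover
        intro e he
        obtain ⟨x, w', hIe, hxX, hw'X⟩ := he
        by_cases heav : e ∈ σ.avail
        · by_cases heL : ∃ P ∈ L, e ∈ P.edges
          · exfalso
            obtain ⟨P, hP, heP⟩ := heL
            exact hPX P hP x (P.isWalk.mem_of_mem_I heP (by rw [hIe]; simp)) hxX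
          · by_cases heg : e = g
            · exact Or.inl heg
            · exfalso
              push_neg at heL
              have heS : e ∈ S' := ⟨heav, heL, heg⟩
              exact hw'X (hxX.extend hIe heS)
        · exact Or.inr (hnotavail e heav)

end Grapht
namespace Grapht

variable {V : Type u} {E : Type v} {G : Grapht V E}

lemma step_ex {s t : V} (hG : G.InnerEulerian) (hT : G.T = {s, t}) (hst : s ≠ t)
    (σ : LSt G) (hσ : σ.Inv s t) (o : Option E) :
    ∃ τ : LSt G, τ.Inv s t ∧
      (∃ ps cs, τ.paths = ps ++ σ.paths ∧ τ.cycs = cs ++ σ.cycs) ∧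
      ∀ g, o = some g → g ∈ σ.avail →
        ((g ∈ G.edgeCut {s} → ∃ P ∈ τ.paths, g ∈ P.edges) ∧
         (g ∈ G.edgeCut {t} → (∃ P ∈ τ.paths, g ∈ P.edges) ∨ (∃ C ∈ τ.cycs, g ∈ C.edges))) := by
  classical
  obtain ⟨L, hL⟩ := hσ.2.2.2.2.1
  cases o with
  | none => exact ⟨σ, hσ, ⟨[], [], rfl, rfl⟩, fun g hg => by simp at hg⟩
  | some g =>
    by_cases hgav : g ∈ σ.avail
    · by_cases hcs : g ∈ G.edgeCut {s}
      · obtain ⟨P, hP, hgP⟩ := hL.2.2.2 g hgav hcs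
        refine ⟨⟨P :: σ.paths, σ.cycs⟩, hσ.consume_path hL hP, ⟨[P], [], rfl, rfl⟩, ?_⟩
        rintro g' hg' _
        obtain rfl : g = g' := by simpa using hg'
        exact ⟨fun _ => ⟨P, by simp, hgP⟩, fun _ => Or.inl ⟨P, by simp, hgP⟩⟩
      · by_cases hct : g ∈ G.edgeCut {t}
        · by_cases hgL : ∃ P ∈ L, g ∈ P.edges
          · obtain ⟨P, hP, hgP⟩ := hgL
            refine ⟨⟨P :: σ.paths, σ.cycs⟩, hσ.consume_path hL hP, ⟨[P], [], rfl, rfl⟩, ?_⟩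
            rintro g' hg' _
            obtain rfl : g = g' := by simpa using hg'
            exact ⟨fun h => absurd h hcs, fun _ => Or.inl ⟨P, by simp, hgP⟩⟩
          · push_neg at hgL
            rcases t_step hG hT hst hσ hL hgav hct hcs hgL with ⟨Q, hgQ, hinv⟩ | ⟨C, hgC, hinv⟩
            · refine ⟨⟨Q :: σ.paths, σ.cycs⟩, hinv, ⟨[Q], [], rfl, rfl⟩, ?_⟩
              rintro g' hg' _
              obtain rfl : g = g' := by simpa using hg'
              exact ⟨fun h => absurd h hcs, fun _ => Or.inl ⟨Q, by simp, hgQ⟩⟩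
            · refine ⟨⟨σ.paths, C :: σ.cycs⟩, hinv, ⟨[], [C], rfl, rfl⟩, ?_⟩
              rintro g' hg' _
              obtain rfl : g = g' := by simpa using hg'
              exact ⟨fun h => absurd h hcs, fun _ => Or.inr ⟨C, by simp, hgC⟩⟩
        · refine ⟨σ, hσ, ⟨[], [], rfl, rfl⟩, ?_⟩
          rintro g' hg' _
          obtain rfl : g = g' := by simpa using hg'
          exact ⟨fun h => absurd h hcs, fun h => absurd h hct⟩
    · refine ⟨σ, hσ, ⟨[], [], rfl, rfl⟩, ?_⟩
      rintro g' hg' hav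
      obtain rfl : g = g' := by simpa using hg'
      exact absurd hav hgav

lemma exists_seq {s t : V} (hG : G.InnerEulerian) (hT : G.T = {s, t}) (hst : s ≠ t)
    (hs : G.StLinked s t) (en : ℕ → Option E) :
    ∃ f : ℕ → LSt G, (∀ n, (f n).Inv s t) ∧
      (∀ n, ∃ ps cs, (f (n + 1)).paths = ps ++ (f n).paths ∧
        (f (n + 1)).cycs = cs ++ (f n).cycs) ∧
      (∀ n g, en n = some g → g ∈ (f n).avail →
        ((g ∈ G.edgeCut {s} → ∃ P ∈ (f (n + 1)).paths, g ∈ P.edges) ∧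
         (g ∈ G.edgeCut {t} → (∃ P ∈ (f (n + 1)).paths, g ∈ P.edges) ∨
            (∃ C ∈ (f (n + 1)).cycs, g ∈ C.edges)))) := by
  classical
  have inv0 : (⟨[], []⟩ : LSt G).Inv s t := by
    obtain ⟨Ps0, h1, h2, h3⟩ := hs
    exact ⟨by simp, by simp, by simp, by simp,
      ⟨Ps0, h2, fun P hP e he => ⟨by simp, by simp⟩, h1, fun e _ hc => h3 e hc⟩, by simp⟩
  choose τf hi hext hhand using
    fun (p : {σ : LSt G // σ.Inv s t}) (n : ℕ) => step_ex hG hT hst p.1 p.2 (en n)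
  let F' : ℕ → {σ : LSt G // σ.Inv s t} :=
    fun n => Nat.rec ⟨⟨[], []⟩, inv0⟩ (fun n p => ⟨τf p n, hi p n⟩) n
  exact ⟨fun n => (F' n).1, fun n => (F' n).2, fun n => hext (F' n) n, fun n => hhand (F' n) n⟩

lemma pairwise_mem_or {α : Type*} {R : α → α → Prop} {l : List α} (h : l.Pairwise R)
    {a b : α} (ha : a ∈ l) (hb : b ∈ l) (hne : a ≠ b) : R a b ∨ R b a := by
  induction h with
  | nil => simp at ha
  | cons hx hxs ih =>
    rcases List.mem_cons.1 ha with rfl | ha' <;> rcases List.mem_cons.1 hb with rfl | hb'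
    · exact absurd rfl hne
    · exact Or.inl (hx b hb')
    · exact Or.inr (hx a ha')
    · exact ih ha' hb'

lemma IsWalk.restrict {F : Set E} {vs : List V} {es : List E} (h : G.IsWalk vs es)
    (hF : ∀ e ∈ es, e ∈ F) :
    (G.restrict F).IsWalk vs (es.pmap (fun e he => (⟨e, he⟩ : {e // e ∈ F})) hF) := by
  induction h with
  | nil v => exact IsWalk.nil v
  | cons hI hw ih =>
    simp only [List.pmap]
    exact IsWalk.cons (by simpa [Grapht.restrict] using hI) (ih _)

/-- Transfer a cycle of `G` whose edges lie in `F` to the restricted grapht. -/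
def Cycle.restrictTo (C : G.Cycle) (F : Set E) (h : ∀ e ∈ C.edges, e ∈ F) :
    (G.restrict F).Cycle where
  verts := C.verts
  edges := C.edges.pmap (fun e he => (⟨e, he⟩ : {e // e ∈ F})) h
  isWalk := C.isWalk.restrict h
  closed := C.closed
  nontrivial := by
    simp only [ne_eq, List.pmap_eq_nil_iff]
    exact C.nontrivial
  edges_nodup := by
    refine List.Nodup.pmap ?_ C.edges_nodup
    intro a ha b hb hab
    exact congrArg Subtype.val hab
  tail_nodup := C.tail_nodup

lemma Cycle.mem_restrictTo_edges {C : G.Cycle} {F : Set E} {h : ∀ e ∈ C.edges, e ∈ F}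
    {x : {e // e ∈ F}} : x ∈ (C.restrictTo F h).edges ↔ x.1 ∈ C.edges := by
  simp only [Cycle.restrictTo, List.mem_pmap]
  constructor
  · rintro ⟨a, ha, rfl⟩
    exact ha
  · intro hx
    exact ⟨x.1, hx, rfl⟩

lemma mem_sysEdges {Ps : Set G.Path} {e : E} :
    e ∈ G.sysEdges Ps ↔ ∃ P ∈ Ps, e ∈ P.edges := by
  simp [sysEdges, Path.edgeSet, Set.mem_iUnion]

end Grapht

/-- In a countable inner Eulerian two-terminal grapht in which `s` is linked, there is
a linkage `Ps` of `s` together with a family of pairwise edge-disjoint cycles in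
`G − E(Ps)` covering `δ_{G−E(Ps)}(t)`. -/
theorem linkage_with_cycles {V : Type u} {E : Type v} [Countable E] (G : Grapht V E)
    (s t : V) (hst : s ≠ t) (hT : G.T = {s, t})
    (hG : G.InnerEulerian) (hs : G.StLinked s t) :
    ∃ Ps : Set G.Path, G.IsStLinkage s t Ps ∧
      ∃ Cs : Set (G.restrict (G.sysEdges Ps)ᶜ).Cycle,
        (∀ c ∈ Cs, ∀ c' ∈ Cs, c ≠ c' → ∀ f, f ∈ c.edges → f ∉ c'.edges) ∧
        ∀ e ∈ (G.restrict (G.sysEdges Ps)ᶜ).edgeCut {t}, ∃ c ∈ Cs, e ∈ c.edges := by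
  classical
  open Grapht in
  obtain ⟨enf, hinj⟩ := Countable.exists_injective_nat E
  set en : ℕ → Option E := fun n =>
    if h : ∃ e : E, enf e = n then some h.choose else none with hen_def
  have hen : ∀ e : E, en (enf e) = some e := by
    intro e
    have h : ∃ e' : E, enf e' = enf e := ⟨e, rfl⟩
    simp only [hen_def, dif_pos h]
    exact congrArg some (hinj h.choose_spec)
  obtain ⟨f, hInv, hExt, hHand⟩ := Grapht.exists_seq hG hT hst hs en
  -- monotonicity
  have hmonoP : ∀ m n, m ≤ n → ∀ P ∈ (f m).paths, P ∈ (f n).paths := by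
    intro m n hmn
    induction n, hmn using Nat.le_induction with
    | base => exact fun P hP => hP
    | succ n _ ih =>
      intro P hP
      obtain ⟨ps, cs, hp, _⟩ := hExt n
      rw [hp]
      exact List.mem_append_right _ (ih P hP)
  have hmonoC : ∀ m n, m ≤ n → ∀ C ∈ (f m).cycs, C ∈ (f n).cycs := by
    intro m n hmn
    induction n, hmn using Nat.le_induction with
    | base => exact fun C hC => hC
    | succ n _ ih =>
      intro C hC
      obtain ⟨ps, cs, _, hc⟩ := hExt n
      rw [hc]
      exact List.mem_append_right _ (ih C hC)
  set Ps : Set G.Path := {P | ∃ n, P ∈ (f n).paths} with hPs_def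
  have hPsAB : ∀ P ∈ Ps, G.IsABPath {s} {t} P := by
    rintro P ⟨n, hn⟩
    exact (hInv n).1 P hn
  have hPsdisj : G.EdgeDisjoint Ps := by
    rintro P ⟨m, hm⟩ Q ⟨n, hn⟩ hne
    have hPN : P ∈ (f (max m n)).paths := hmonoP m _ (le_max_left m n) P hm
    have hQN : Q ∈ (f (max m n)).paths := hmonoP n _ (le_max_right m n) Q hn
    rcases Grapht.pairwise_mem_or (hInv (max m n)).2.1 hPN hQN hne with h | h
    · exact fun e heP heQ => h e heP heQ
    · exact fun e heP heQ => h e heQ heP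
  have hcov_s : ∀ e ∈ G.edgeCut {s}, ∃ P ∈ Ps, e ∈ P.edges := by
    intro e he
    by_cases hav : e ∈ (f (enf e)).avail
    · obtain ⟨P, hP, heP⟩ := (hHand (enf e) e (hen e) hav).1 he
      exact ⟨P, ⟨enf e + 1, hP⟩, heP⟩
    · rw [Grapht.LSt.avail, Set.mem_setOf_eq, not_and_or] at hav
      rcases hav with hav | hav
      · push_neg at hav
        obtain ⟨P, hP, heP⟩ := hav
        exact ⟨P, ⟨enf e, hP⟩, heP⟩
      · push_neg at hav
        obtain ⟨C, hC, heC⟩ := hav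
        exact absurd he ((hInv (enf e)).2.2.2.2.2 C hC e heC)
  have hlink : G.IsStLinkage s t Ps := ⟨hPsdisj, hPsAB, hcov_s⟩
  set F : Set E := (G.sysEdges Ps)ᶜ with hF_def
  have hCF : ∀ n, ∀ C ∈ (f n).cycs, ∀ e ∈ C.edges, e ∈ F := by
    intro n C hC e heC
    rw [hF_def, Set.mem_compl_iff, Grapht.mem_sysEdges]
    rintro ⟨P, ⟨m, hm⟩, heP⟩
    have hPN : P ∈ (f (max m n)).paths := hmonoP m _ (le_max_left m n) P hm
    have hCN : C ∈ (f (max m n)).cycs := hmonoC n _ (le_max_right m n) C hC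
    exact (hInv (max m n)).2.2.2.1 P hPN C hCN e heP heC
  set Cs : Set (G.restrict F).Cycle :=
    {c | ∃ n, ∃ C ∈ (f n).cycs, ∃ hh : ∀ e ∈ C.edges, e ∈ F, c = C.restrictTo F hh}
    with hCs_def
  refine ⟨Ps, hlink, Cs, ?_, ?_⟩
  · rintro c ⟨m, C, hC, hh, rfl⟩ c' ⟨n, C', hC', hh', rfl⟩ hne x hx hx'
    have hCC' : C ≠ C' := by
      rintro rfl
      exact hne rfl
    have hx1 : x.1 ∈ C.edges := Grapht.Cycle.mem_restrictTo_edges.1 hx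
    have hx1' : x.1 ∈ C'.edges := Grapht.Cycle.mem_restrictTo_edges.1 hx'
    have hCN : C ∈ (f (max m n)).cycs := hmonoC m _ (le_max_left m n) C hC
    have hCN' : C' ∈ (f (max m n)).cycs := hmonoC n _ (le_max_right m n) C' hC'
    rcases Grapht.pairwise_mem_or (hInv (max m n)).2.2.1 hCN hCN' hCC' with h | h
    · exact h x.1 hx1 hx1'
    · exact h x.1 hx1' hx1
  · intro e he
    obtain ⟨a, b, hIe, ha, hb⟩ := he
    have het : e.1 ∈ G.edgeCut {t} := ⟨a, b, hIe, ha, hb⟩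
    have heF : e.1 ∈ F := e.2
    have hnotP : ∀ P ∈ Ps, e.1 ∉ P.edges := by
      intro P hP heP
      rw [hF_def, Set.mem_compl_iff, Grapht.mem_sysEdges] at heF
      exact heF ⟨P, hP, heP⟩
    have hfind : ∃ n, ∃ C ∈ (f n).cycs, e.1 ∈ C.edges := by
      by_cases hav : e.1 ∈ (f (enf e.1)).avail
      · rcases (hHand (enf e.1) e.1 (hen e.1) hav).2 het with ⟨P, hP, heP⟩ | ⟨C, hC, heC⟩
        · exact absurd heP (hnotP P ⟨enf e.1 + 1, hP⟩)
        · exact ⟨enf e.1 + 1, C, hC, heC⟩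
      · rw [Grapht.LSt.avail, Set.mem_setOf_eq, not_and_or] at hav
        rcases hav with hav | hav
        · push_neg at hav
          obtain ⟨P, hP, heP⟩ := hav
          exact absurd heP (hnotP P ⟨enf e.1, hP⟩)
        · push_neg at hav
          obtain ⟨C, hC, heC⟩ := hav
          exact ⟨enf e.1, C, hC, heC⟩
    obtain ⟨n, C, hC, heC⟩ := hfind
    refine ⟨C.restrictTo F (hCF n C hC), ⟨n, C, hC, hCF n C hC, rfl⟩, ?_⟩
    exact Grapht.Cycle.mem_restrictTo_edges.2 heC
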